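/- For the d-dimensional unit cube with d ≥ 2, the integral over [0,1]^d of 1/(1 + b_1 b_2 ⋯ b_d)^2 equals log 2 when d = 2, and equals ((2^{d−2} − 1)/2^{d−2}) · ζ(d−1) when d ≥ 3, where ζ is the Riemann zeta function. For d = 1 the integral equals 1/2. -/

import Mathlib

open Real MeasureTheory Filter Topology Set Finset

lemma int_pow_Icc (n : ℕ) : ∫ y in Set.Icc (0:ℝ) 1, y ^ n = 1 / (n+1) := by
  rw [MeasureTheory.integral_Icc_eq_integral_Ioc,
    ← intervalIntegral.integral_of_le zero_le_one, integral_pow]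
  simp


lemma cube_pow (d n : ℕ) :
    ∫ b in Set.Icc (0 : Fin d → ℝ) 1, (∏ i, b i) ^ n = ((1:ℝ)/(n+1)) ^ d := by
  have hg : ∀ x : Fin d → ℝ, (Set.Icc (0:Fin d → ℝ) 1).indicator (fun b => (∏ i, b i) ^ n) x
      = ∏ i, (Set.Icc (0:ℝ) 1).indicator (fun y => y ^ n) (x i) := by
    intro x
    by_cases hx : x ∈ Set.Icc (0:Fin d → ℝ) 1
    · rw [Set.indicator_of_mem hx, ← Finset.prod_pow]
      refine Finset.prod_congr rfl fun i _ => ?_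
      exact (Set.indicator_of_mem (Set.mem_Icc.mpr ⟨hx.1 i, hx.2 i⟩) _).symm
    · rw [Set.indicator_of_notMem hx, eq_comm]
      obtain ⟨i, hi⟩ : ∃ i, x i ∉ Set.Icc (0:ℝ) 1 := by
        by_contra h; push_neg at h
        exact hx ⟨fun i => (h i).1, fun i => (h i).2⟩
      rw [Finset.prod_eq_zero (Finset.mem_univ i) (Set.indicator_of_notMem hi _)]
  rw [← MeasureTheory.integral_indicator measurableSet_Icc]
  simp_rw [hg]
  rw [MeasureTheory.integral_fintype_prod_volume_eq_pow
    (fun y : ℝ => (Set.Icc (0:ℝ) 1).indicator (fun y => y ^ n) y),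
    MeasureTheory.integral_indicator measurableSet_Icc, int_pow_Icc]
  simp

lemma key_id (N : ℕ) (t : ℝ) :
    (1 - t)^2 * ∑ n ∈ Finset.range N, ((n:ℝ)+1) * t^n
      = 1 - ((N:ℝ)+1)*t^N + (N:ℝ)*t^(N+1) := by
  induction N with
  | zero => simp
  | succ N ih =>
    rw [Finset.sum_range_succ, mul_add, ih]
    push_cast
    ring

lemma ptwise (N : ℕ) {x : ℝ} (h0 : 0 ≤ x) (h1 : x ≤ 1) :
    |1/(1+x)^2 - ∑ n ∈ Finset.range N, (-1:ℝ)^n * ((n:ℝ)+1) * x^n|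
      ≤ (2*(N:ℝ)+1) * x^N := by
  have hx2 : (0:ℝ) < (1+x)^2 := by positivity
  have hkey := key_id N (-x)
  have hS : ∑ n ∈ Finset.range N, (-1:ℝ)^n * ((n:ℝ)+1) * x^n
      = ∑ n ∈ Finset.range N, ((n:ℝ)+1) * (-x)^n := by
    refine Finset.sum_congr rfl fun n _ => ?_
    rw [neg_pow x n]; ring
  have hiden : 1/(1+x)^2 - ∑ n ∈ Finset.range N, (-1:ℝ)^n * ((n:ℝ)+1) * x^n
      = (((N:ℝ)+1)*(-x)^N - (N:ℝ)*(-x)^(N+1)) / (1+x)^2 := by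
    rw [hS, eq_div_iff hx2.ne', sub_mul, one_div, inv_mul_cancel₀ hx2.ne']
    have h2 : ((1:ℝ)+x)^2 = (1-(-x))^2 := by ring
    rw [mul_comm, h2, hkey]
    ring
  rw [hiden, abs_div, abs_of_pos hx2]
  have h2 : (1:ℝ) ≤ (1+x)^2 := by nlinarith
  have hnum : |((N:ℝ)+1)*(-x)^N - (N:ℝ)*(-x)^(N+1)| ≤ (2*(N:ℝ)+1) * x^N := by
    calc |((N:ℝ)+1)*(-x)^N - (N:ℝ)*(-x)^(N+1)|
        ≤ |((N:ℝ)+1)*(-x)^N| + |(N:ℝ)*(-x)^(N+1)| := abs_sub _ _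
      _ = ((N:ℝ)+1)*x^N + (N:ℝ)*x^(N+1) := by
          rw [abs_mul, abs_mul, abs_pow, abs_pow, abs_neg, abs_of_nonneg h0,
            abs_of_nonneg (by positivity), abs_of_nonneg (by positivity)]
      _ ≤ ((N:ℝ)+1)*x^N + (N:ℝ)*x^N := by
          have h := pow_le_pow_of_le_one h0 h1 (Nat.le_succ N)
          have h' : (0:ℝ) ≤ (N:ℝ) := Nat.cast_nonneg N
          have := mul_le_mul_of_nonneg_left h h'
          simp only [Nat.succ_eq_add_one] at this
          linarith
      _ = (2*(N:ℝ)+1) * x^N := by ring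
  calc |((N:ℝ)+1)*(-x)^N - (N:ℝ)*(-x)^(N+1)| / (1+x)^2
      ≤ |((N:ℝ)+1)*(-x)^N - (N:ℝ)*(-x)^(N+1)| / 1 := by gcongr
    _ ≤ (2*(N:ℝ)+1) * x^N := by rw [div_one]; exact hnum

lemma cont_prod (d : ℕ) : Continuous (fun b : Fin d → ℝ => ∏ i, b i) :=
  continuous_finset_prod _ fun i _ => continuous_apply i

lemma prodIcc_mem {d : ℕ} {b : Fin d → ℝ} (hb : b ∈ Set.Icc (0:Fin d → ℝ) 1) :
    0 ≤ ∏ i, b i ∧ ∏ i, b i ≤ 1 := by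
  constructor
  · exact Finset.prod_nonneg fun i _ => hb.1 i
  · exact Finset.prod_le_one (fun i _ => hb.1 i) (fun i _ => hb.2 i)

lemma f_intOn (d : ℕ) :
    IntegrableOn (fun b : Fin d → ℝ => 1/(1+∏ i, b i)^2) (Set.Icc 0 1) := by
  apply ContinuousOn.integrableOn_compact isCompact_Icc
  apply ContinuousOn.div continuousOn_const
    (((continuous_const.add (cont_prod d)).pow 2).continuousOn)
  intro b hb
  have h := (prodIcc_mem hb).1
  have : (0:ℝ) < 1 + ∏ i, b i := by linarith
  exact pow_ne_zero 2 this.ne'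

lemma S_intOn (d N : ℕ) :
    IntegrableOn (fun b : Fin d → ℝ =>
      ∑ n ∈ Finset.range N, (-1:ℝ)^n * ((n:ℝ)+1) * (∏ i, b i)^n) (Set.Icc 0 1) := by
  apply ContinuousOn.integrableOn_compact isCompact_Icc
  exact (continuous_finset_sum _ fun n _ =>
    (continuous_const.mul ((cont_prod d).pow n))).continuousOn

lemma mono_intOn (d n : ℕ) :
    IntegrableOn (fun b : Fin d → ℝ => (∏ i, b i)^n) (Set.Icc 0 1) :=
  ContinuousOn.integrableOn_compact isCompact_Icc ((cont_prod d).pow n).continuousOn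

lemma term_intOn (d n : ℕ) :
    IntegrableOn (fun b : Fin d → ℝ => (-1:ℝ)^n * ((n:ℝ)+1) * (∏ i, b i)^n) (Set.Icc 0 1) :=
  ContinuousOn.integrableOn_compact isCompact_Icc
    (continuous_const.mul ((cont_prod d).pow n)).continuousOn

lemma S_int_eq (d N : ℕ) (hd : 2 ≤ d) :
    ∫ b in Set.Icc (0 : Fin d → ℝ) 1,
        ∑ n ∈ Finset.range N, (-1:ℝ)^n * ((n:ℝ)+1) * (∏ i, b i)^n
      = ∑ n ∈ Finset.range N, (-1:ℝ)^n / ((n:ℝ)+1)^(d-1) := by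
  rw [MeasureTheory.integral_finset_sum _ (fun n _ => term_intOn d n)]
  refine Finset.sum_congr rfl fun n _ => ?_
  rw [integral_const_mul, cube_pow d n]
  obtain ⟨m, rfl⟩ : ∃ m, d = m + 2 := ⟨d - 2, by omega⟩
  have hn : ((n:ℝ)+1) ≠ 0 := by positivity
  have h1 : m + 2 - 1 = m + 1 := by omega
  rw [h1, div_pow, one_pow]
  field_simp
  ring

lemma main_tendsto (d : ℕ) (hd : 2 ≤ d) :
    Tendsto (fun N => ∑ n ∈ Finset.range N, (-1:ℝ)^n / ((n:ℝ)+1)^(d-1)) atTop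
      (𝓝 (∫ b in Set.Icc (0 : Fin d → ℝ) 1, 1 / (1 + ∏ i, b i) ^ 2)) := by
  set I := ∫ b in Set.Icc (0 : Fin d → ℝ) 1, 1 / (1 + ∏ i, b i) ^ 2 with hI
  rw [tendsto_iff_dist_tendsto_zero]
  apply squeeze_zero (fun N => dist_nonneg)
    (g := fun N : ℕ => (2*(N:ℝ)+1) * (1/((N:ℝ)+1))^d)
  · intro N
    rw [Real.dist_eq, abs_sub_comm, ← S_int_eq d N hd,
      ← MeasureTheory.integral_sub (f_intOn d) (S_intOn d N)]
    have hb_int : IntegrableOn (fun b : Fin d → ℝ => (2*(N:ℝ)+1) * (∏ i, b i)^N)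
        (Set.Icc 0 1) := (mono_intOn d N).const_mul _
    calc |∫ b in Set.Icc (0 : Fin d → ℝ) 1,
            (1/(1+∏ i, b i)^2 - ∑ n ∈ Finset.range N, (-1:ℝ)^n * ((n:ℝ)+1) * (∏ i, b i)^n)|
        ≤ ∫ b in Set.Icc (0 : Fin d → ℝ) 1, (2*(N:ℝ)+1) * (∏ i, b i)^N := by
          rw [← Real.norm_eq_abs]
          apply MeasureTheory.norm_integral_le_of_norm_le hb_int
          apply MeasureTheory.ae_restrict_of_forall_mem measurableSet_Icc
          intro b hb
          rw [Real.norm_eq_abs]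
          exact ptwise N (prodIcc_mem hb).1 (prodIcc_mem hb).2
      _ = (2*(N:ℝ)+1) * (1/((N:ℝ)+1))^d := by
          rw [integral_const_mul, cube_pow d N]
  · have h1 : Tendsto (fun N : ℕ => 3/((N:ℝ)+1)) atTop (𝓝 0) := by
      have := tendsto_one_div_add_atTop_nhds_zero_nat (𝕜 := ℝ)
      simpa [div_eq_mul_inv] using this.const_mul 3
    apply squeeze_zero (fun N => by positivity) _ h1
    intro N
    have hN1 : (0:ℝ) < (N:ℝ)+1 := by positivity
    have hpow : ((N:ℝ)+1)^2 ≤ ((N:ℝ)+1)^d := pow_le_pow_right₀ (by linarith) hd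
    rw [div_pow, one_pow, mul_one_div, div_le_div_iff₀ (by positivity) hN1]
    calc (2*(N:ℝ)+1) * ((N:ℝ)+1) ≤ 3 * ((N:ℝ)+1)^2 := by nlinarith
      _ ≤ 3 * ((N:ℝ)+1)^d := by nlinarith

lemma oneD : ∫ x in Set.Icc (0:ℝ) 1, 1/(1+x)^2 = 1/2 := by
  rw [MeasureTheory.integral_Icc_eq_integral_Ioc,
    ← intervalIntegral.integral_of_le zero_le_one]
  have hF : ∀ x ∈ Set.uIcc (0:ℝ) 1, HasDerivAt (fun y : ℝ => -(1+y)⁻¹) (1/(1+x)^2) x := by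
    intro x hx
    rw [Set.uIcc_of_le zero_le_one] at hx
    have hne : (1+x) ≠ 0 := by have := hx.1; positivity
    have h := (((hasDerivAt_id x).const_add 1).inv hne).neg
    have e : (1:ℝ)/(1+x)^2 = -(-1 / (1 + id x) ^ 2) := by simp only [id]; ring
    rw [e]; exact h
  rw [intervalIntegral.integral_eq_sub_of_hasDerivAt hF]
  · norm_num
  · apply ContinuousOn.intervalIntegrable
    apply ContinuousOn.div continuousOn_const
    · fun_prop
    · intro x hx
      rw [Set.uIcc_of_le zero_le_one] at hx
      have := hx.1; positivity

lemma dim1 : ∫ b in Set.Icc (0 : Fin 1 → ℝ) 1, 1 / (1 + ∏ i, b i) ^ 2 = 1 / 2 := by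
  have hmp := (volume_preserving_funUnique (Fin 1) ℝ).symm
  have h := hmp.setIntegral_preimage_emb
    (MeasurableEquiv.funUnique (Fin 1) ℝ).symm.measurableEmbedding
    (fun b : Fin 1 → ℝ => 1 / (1 + ∏ i, b i) ^ 2) (Set.Icc 0 1)
  have hpre : (MeasurableEquiv.funUnique (Fin 1) ℝ).symm ⁻¹' Set.Icc 0 1
      = Set.Icc (0:ℝ) 1 := by
    ext x
    simp [MeasurableEquiv.funUnique, Equiv.funUnique, Set.mem_Icc, Pi.le_def]
  refine h.symm.trans ?_
  rw [hpre, ← oneD]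
  refine setIntegral_congr_fun measurableSet_Icc fun x _ => ?_
  simp [Fin.prod_univ_one, MeasurableEquiv.funUnique]

lemma alt_eq_harm (N : ℕ) :
    ∑ n ∈ Finset.range (2*N), (-1:ℝ)^n/((n:ℝ)+1)
      = (harmonic (2*N) : ℝ) - (harmonic N : ℝ) := by
  induction N with
  | zero => simp
  | succ N ih =>
    have h2 : 2*(N+1) = (2*N+1)+1 := by ring
    rw [h2, Finset.sum_range_succ, Finset.sum_range_succ, ih]
    have e1 : (harmonic (2*N+1+1) : ℝ) = (harmonic (2*N+1) : ℝ) + ((2*N+1:ℕ)+1:ℝ)⁻¹ := by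
      rw [harmonic_succ]; push_cast; norm_num
    have e2 : (harmonic (2*N+1) : ℝ) = (harmonic (2*N) : ℝ) + ((2*N:ℕ)+1:ℝ)⁻¹ := by
      rw [harmonic_succ]; push_cast; norm_num
    have e3 : (harmonic (N+1) : ℝ) = (harmonic N : ℝ) + ((N:ℕ)+1:ℝ)⁻¹ := by
      rw [harmonic_succ]; push_cast; norm_num
    rw [e1, e2, e3]
    have hev : (-1:ℝ)^(2*N) = 1 := by
      rw [pow_mul]; norm_num
    have hod : (-1:ℝ)^(2*N+1) = -1 := by
      rw [pow_succ, hev]; norm_num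
    rw [hev, hod]
    have d1 : ((2*N:ℕ):ℝ) + 1 ≠ 0 := by positivity
    have d2 : ((2*N+1:ℕ):ℝ) + 1 ≠ 0 := by positivity
    have d3 : ((N:ℕ):ℝ) + 1 ≠ 0 := by positivity
    push_cast at *
    field_simp
    ring

lemma double_tendsto :
    Tendsto (fun N : ℕ => ∑ n ∈ Finset.range (2*N), (-1:ℝ)^n/((n:ℝ)+1)) atTop
      (𝓝 (Real.log 2)) := by
  have hg : Tendsto (fun N : ℕ => ((harmonic N : ℝ) - Real.log N)) atTop
      (𝓝 Real.eulerMascheroniConstant) := Real.tendsto_harmonic_sub_log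
  have h2N : Tendsto (fun N : ℕ => 2*N) atTop atTop :=
    Filter.tendsto_atTop_atTop.mpr fun b => ⟨b, fun a ha => by omega⟩
  have hg2 : Tendsto (fun N : ℕ => ((harmonic (2*N) : ℝ) - Real.log ((2*N:ℕ):ℝ))) atTop
      (𝓝 Real.eulerMascheroniConstant) := hg.comp h2N
  have hsub : Tendsto (fun N : ℕ =>
      ((harmonic (2*N) : ℝ) - Real.log ((2*N:ℕ):ℝ)) - ((harmonic N : ℝ) - Real.log N)
        + Real.log 2) atTop (𝓝 (Real.log 2)) := by
    have := (hg2.sub hg).add_const (Real.log 2)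
    simpa using this
  apply hsub.congr'
  filter_upwards [eventually_ge_atTop 1] with N hN
  have hN0 : (N:ℝ) ≠ 0 := by positivity
  have hlog : Real.log ((2*N:ℕ):ℝ) = Real.log 2 + Real.log (N:ℝ) := by
    push_cast
    rw [Real.log_mul (by norm_num) hN0]
  rw [alt_eq_harm]
  rw [hlog]
  ring

lemma g_summable (k : ℕ) : Summable (fun n : ℕ => (1:ℝ)/((n:ℝ)+1)^(k+2)) := by
  have h : Summable (fun n : ℕ => (1:ℝ)/(n:ℝ)^(k+2)) :=
    summable_one_div_nat_pow.mpr (by omega)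
  have h2 := (summable_nat_add_iff 1).mpr h
  apply h2.congr
  intro n
  push_cast
  ring

lemma f_summable (k : ℕ) : Summable (fun n : ℕ => (-1:ℝ)^n/((n:ℝ)+1)^(k+2)) := by
  apply Summable.of_norm_bounded (g_summable k)
  intro n
  rw [Real.norm_eq_abs, abs_div, abs_pow, abs_neg, abs_one, one_pow, abs_of_nonneg (by positivity)]

lemma eta_eq (k : ℕ) :
    ∑' n : ℕ, (-1:ℝ)^n/((n:ℝ)+1)^(k+2)
      = (((2:ℝ)^(k+1)-1)/2^(k+1)) * ∑' n : ℕ, (1:ℝ)/((n:ℝ)+1)^(k+2) := by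
  set g : ℕ → ℝ := fun n => (1:ℝ)/((n:ℝ)+1)^(k+2) with hgdef
  set f : ℕ → ℝ := fun n => (-1:ℝ)^n/((n:ℝ)+1)^(k+2) with hfdef
  have hg := g_summable k
  have hf := f_summable k
  have h2inj : Function.Injective (fun n : ℕ => 2*n) := fun a b h => by simpa using h
  have h2inj' : Function.Injective (fun n : ℕ => 2*n+1) := fun a b h => by simpa using h
  have hfe : Summable (fun n => f (2*n)) := hf.comp_injective h2inj
  have hfo : Summable (fun n => f (2*n+1)) := hf.comp_injective h2inj'
  have hge : Summable (fun n => g (2*n)) := hg.comp_injective h2inj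
  have hgo : Summable (fun n => g (2*n+1)) := hg.comp_injective h2inj'
  have heo_f := tsum_even_add_odd hfe hfo
  have heo_g := tsum_even_add_odd hge hgo
  have hfe_eq : ∀ n, f (2*n) = g (2*n) := by
    intro n
    simp only [hfdef, hgdef, pow_mul]
    norm_num
  have hfo_eq : ∀ n, f (2*n+1) = -g (2*n+1) := by
    intro n
    simp only [hfdef, hgdef, pow_succ, pow_mul]
    norm_num
    rw [div_eq_mul_inv, mul_inv, mul_inv]
    ring
  have hO : ∑' n, g (2*n+1) = (1/2^(k+2)) * ∑' n, g n := by
    rw [← tsum_mul_left]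
    apply tsum_congr
    intro n
    simp only [hgdef]
    push_cast
    have h1 : ((2*n+1:ℝ)+1) = 2*((n:ℝ)+1) := by ring
    rw [h1, mul_pow]
    have : ((2:ℝ))^(k+2) ≠ 0 := by positivity
    have : (((n:ℝ)+1))^(k+2) ≠ 0 := by positivity
    field_simp
  have hsum_f : ∑' n, f n = ∑' n, g (2*n) - ∑' n, g (2*n+1) := by
    rw [← heo_f]
    congr 1
    · exact tsum_congr hfe_eq
    · rw [tsum_congr hfo_eq, tsum_neg]
  have hsum_g : ∑' n, g n = ∑' n, g (2*n) + ∑' n, g (2*n+1) := heo_g.symm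
  rw [hsum_f]
  have hE : ∑' n, g (2*n) = ∑' n, g n - ∑' n, g (2*n+1) := by rw [hsum_g]; ring
  rw [hE, hO]
  have h2 : ((2:ℝ))^(k+2) = 2 * 2^(k+1) := by rw [pow_succ]; ring
  have hne : ((2:ℝ))^(k+1) ≠ 0 := by positivity
  rw [h2]
  field_simp
  ring

theorem stmt7 (d : ℕ) :
    (d = 1 →
      ∫ b in Set.Icc (0 : Fin d → ℝ) 1, 1 / (1 + ∏ i, b i) ^ 2 = 1 / 2) ∧
    (d = 2 →
      ∫ b in Set.Icc (0 : Fin d → ℝ) 1, 1 / (1 + ∏ i, b i) ^ 2 = Real.log 2) ∧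
    (3 ≤ d →
      ∫ b in Set.Icc (0 : Fin d → ℝ) 1, 1 / (1 + ∏ i, b i) ^ 2
        = ((2 ^ (d - 2) - 1) / 2 ^ (d - 2)) *
            ∑' n : ℕ, (1 : ℝ) / (n + 1) ^ (d - 1)) := by
  refine ⟨?_, ?_, ?_⟩
  · rintro rfl
    exact dim1
  · rintro rfl
    have hm := main_tendsto 2 le_rfl
    have h2N : Tendsto (fun N : ℕ => 2*N) atTop atTop :=
      Filter.tendsto_atTop_atTop.mpr fun b => ⟨b, fun a ha => by omega⟩
    have hm2 := hm.comp h2N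
    have hm2' : Tendsto (fun N : ℕ => ∑ n ∈ Finset.range (2*N), (-1:ℝ)^n/((n:ℝ)+1)) atTop
        (𝓝 (∫ b in Set.Icc (0 : Fin 2 → ℝ) 1, 1 / (1 + ∏ i, b i) ^ 2)) := by
      apply hm2.congr
      intro N
      simp [Function.comp, pow_one]
    exact (tendsto_nhds_unique hm2' double_tendsto)
  · intro hd
    obtain ⟨k, rfl⟩ : ∃ k, d = k + 3 := ⟨d - 3, by omega⟩
    have hk1 : k + 3 - 1 = k + 2 := by omega
    have hk2 : k + 3 - 2 = k + 1 := by omega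
    rw [hk1, hk2]
    have hm := main_tendsto (k+3) (by omega)
    rw [hk1] at hm
    have hts := (f_summable k).hasSum.tendsto_sum_nat
    rw [tendsto_nhds_unique hm hts, eta_eq k]
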